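/- arXiv:2208.02329 — 2 statements merged into one kernel-verified Lean document; each statement's English description precedes it below -/
import Mathlib

section
/- Let k, l ∈ ℝ² be nonzero vectors and set m := k + l, assumed nonzero. Then the resonance relation sg(k)·|k| + sg(l)·|l| = sg(m)·|m| holds if and only if k and l are colinear, i.e. l = t·k for some real t (with t ≠ 0 and t ≠ −1). Moreover, whenever this holds one also has l·k = sg(l)·sg(k)·|l|·|k| and l·m = sg(l)·sg(m)·|l|·|m|. -/
/-- The generalized sign of a nonzero vector `k ∈ ℝ²`: `sg k = 1` iff `k₁ > 0` or
(`k₁ = 0` and `k₂ > 0`), and `sg k = −1` otherwise. -/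
noncomputable def sg (k : EuclideanSpace ℝ (Fin 2)) : ℝ :=
  if 0 < k 0 ∨ (k 0 = 0 ∧ 0 < k 1) then 1 else -1

lemma sg_mul_self (k : EuclideanSpace ℝ (Fin 2)) : sg k * sg k = 1 := by
  unfold sg; split <;> norm_num

lemma abs_sg (k : EuclideanSpace ℝ (Fin 2)) : |sg k| = 1 := by
  unfold sg; split <;> norm_num

lemma sg_smul_mul (c : ℝ) (k : EuclideanSpace ℝ (Fin 2)) :
    sg (c • k) * ‖c • k‖ = c * (sg k * ‖k‖) := by
  have hsmul : ∀ i, (c • k) i = c * k i := fun i => rfl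
  rcases lt_trichotomy c 0 with hc | hc | hc
  · by_cases hk : k = 0
    · subst hk; simp
    · have hk01 : k 0 ≠ 0 ∨ k 1 ≠ 0 := by
        by_contra h
        push_neg at h
        apply hk
        ext i
        fin_cases i
        · exact h.1
        · exact h.2
      have key : (0 < c * k 0 ∨ (c * k 0 = 0 ∧ 0 < c * k 1)) ↔
          ¬(0 < k 0 ∨ (k 0 = 0 ∧ 0 < k 1)) := by
        constructor
        · rintro (h | ⟨h, h'⟩) hP
          · rcases hP with hP | ⟨hP, hP'⟩ <;> nlinarith
          · have hk0 : k 0 = 0 := by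
              rcases mul_eq_zero.mp h with h0 | h0
              · exact absurd h0 hc.ne
              · exact h0
            have hk1n : k 1 < 0 := by nlinarith
            rcases hP with hP | ⟨hP, hP'⟩ <;> nlinarith
        · intro hP
          rcases lt_trichotomy (k 0) 0 with h0 | h0 | h0
          · exact Or.inl (by nlinarith)
          · have hk1 : k 1 ≠ 0 := by
              rcases hk01 with h | h
              · exact absurd h0 h
              · exact h
            have hk1n : k 1 < 0 := by
              rcases lt_trichotomy (k 1) 0 with h1 | h1 | h1
              · exact h1
              · exact absurd h1 hk1
              · exact absurd (Or.inr ⟨h0, h1⟩) hP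
            exact Or.inr ⟨by rw [h0, mul_zero], by nlinarith⟩
          · exact absurd (Or.inl h0) hP
      have h1 : sg (c • k) = -sg k := by
        unfold sg
        simp only [hsmul]
        by_cases hP : (0 < k 0 ∨ (k 0 = 0 ∧ 0 < k 1))
        · rw [if_neg (fun hcond => (key.mp hcond) hP), if_pos hP]
        · rw [if_pos (key.mpr hP), if_neg hP]; norm_num
      have h2 : ‖c • k‖ = -c * ‖k‖ := by
        rw [norm_smul, Real.norm_eq_abs, abs_of_neg hc]
      rw [h1, h2]; ring
  · subst hc; simp [sg]
  · have key : (0 < c * k 0 ∨ (c * k 0 = 0 ∧ 0 < c * k 1)) ↔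
        (0 < k 0 ∨ (k 0 = 0 ∧ 0 < k 1)) := by
      constructor
      · rintro (h | ⟨h, h'⟩)
        · exact Or.inl (by nlinarith)
        · have hk0 : k 0 = 0 := by
            rcases mul_eq_zero.mp h with h0 | h0
            · exact absurd h0 hc.ne'
            · exact h0
          exact Or.inr ⟨hk0, by nlinarith⟩
      · rintro (h | ⟨h, h'⟩)
        · exact Or.inl (by nlinarith)
        · exact Or.inr ⟨by rw [h, mul_zero], by nlinarith⟩
    have h1 : sg (c • k) = sg k := by
      unfold sg
      simp only [hsmul]
      by_cases hP : (0 < k 0 ∨ (k 0 = 0 ∧ 0 < k 1))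
      · rw [if_pos (key.mpr hP), if_pos hP]
      · rw [if_neg (fun hcond => hP (key.mp hcond)), if_neg hP]
    have h2 : ‖c • k‖ = c * ‖k‖ := by
      rw [norm_smul, Real.norm_eq_abs, abs_of_pos hc]
    rw [h1, h2]; ring

/-- For nonzero `k, l ∈ ℝ²` with `m = k + l ≠ 0`, the resonance
relation `sg(k)|k| + sg(l)|l| = sg(m)|m|` holds if and only if `k` and `l` are
colinear (`l = t·k` with `t ≠ 0`, `t ≠ −1`); moreover, under the resonance
relation one has `l·k = sg(l)sg(k)|l||k|` and `l·m = sg(l)sg(m)|l||m|`. -/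
theorem resonance_iff_colinear
    (k l : EuclideanSpace ℝ (Fin 2)) (hk : k ≠ 0) (hl : l ≠ 0) (hm : k + l ≠ 0) :
    (sg k * ‖k‖ + sg l * ‖l‖ = sg (k + l) * ‖k + l‖ ↔
      ∃ t : ℝ, t ≠ 0 ∧ t ≠ -1 ∧ l = t • k)
    ∧ (sg k * ‖k‖ + sg l * ‖l‖ = sg (k + l) * ‖k + l‖ →
        (inner ℝ l k : ℝ) = sg l * sg k * ‖l‖ * ‖k‖
        ∧ (inner ℝ l (k + l) : ℝ) = sg l * sg (k + l) * ‖l‖ * ‖k + l‖) := by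
  have hnk : ‖k‖ ≠ 0 := norm_ne_zero_iff.mpr hk
  have hnl : ‖l‖ ≠ 0 := norm_ne_zero_iff.mpr hl
  have hsk2 := sg_mul_self k
  have hsl2 := sg_mul_self l
  have hsm2 := sg_mul_self (k + l)
  -- forward direction: resonance implies colinearity
  have fwd : sg k * ‖k‖ + sg l * ‖l‖ = sg (k + l) * ‖k + l‖ →
      ∃ t : ℝ, t ≠ 0 ∧ t ≠ -1 ∧ l = t • k := by
    intro h
    have hsq : (sg k * ‖k‖ + sg l * ‖l‖) ^ 2 = ‖k + l‖ ^ 2 := by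
      rw [h]; linear_combination (‖k + l‖ ^ 2) * hsm2
    rw [norm_add_sq_real] at hsq
    have hinner : (inner ℝ k l : ℝ) = sg k * sg l * (‖k‖ * ‖l‖) := by
      linear_combination (-(1:ℝ)/2) * hsq + (‖k‖ ^ 2 / 2) * hsk2 + (‖l‖ ^ 2 / 2) * hsl2
    set c := sg k * sg l with hc
    have hcc : c * c = 1 := by rw [hc]; linear_combination (sg l * sg l) * hsk2 + hsl2
    have hcabs : |c| = 1 := by
      rw [hc, abs_mul, abs_sg, abs_sg]; norm_num
    have hc0 : c ≠ 0 := by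
      intro h0; rw [h0] at hcc; norm_num at hcc
    have h1 : (inner ℝ k (c • l) : ℝ) = ‖k‖ * ‖c • l‖ := by
      rw [real_inner_smul_right, hinner, norm_smul, Real.norm_eq_abs, hcabs]
      linear_combination (‖k‖ * ‖l‖) * hcc
    have h2 := inner_eq_norm_mul_iff_real.mp h1
    -- h2 : ‖c • l‖ • k = ‖k‖ • (c • l)
    have h3 : ‖l‖ • k = (‖k‖ * c) • l := by
      rw [← smul_smul]
      rw [norm_smul, Real.norm_eq_abs, hcabs, one_mul] at h2
      exact h2
    have hcoef : (‖k‖ * c)⁻¹ * ‖l‖ = c * ‖l‖ / ‖k‖ := by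
      field_simp
      linear_combination (-1 : ℝ) * hcc
    have h4 : l = (c * ‖l‖ / ‖k‖) • k := by
      rw [← hcoef, ← smul_smul, h3, inv_smul_smul₀ (mul_ne_zero hnk hc0)]
    refine ⟨c * ‖l‖ / ‖k‖, ?_, ?_, h4⟩
    · exact div_ne_zero (mul_ne_zero hc0 hnl) hnk
    · intro ht
      apply hm
      rw [h4, ht]
      simp
  constructor
  · constructor
    · exact fwd
    · rintro ⟨t, ht0, ht1, rfl⟩
      have hm' : k + t • k = (1 + t) • k := by rw [add_smul, one_smul]
      rw [hm', sg_smul_mul, sg_smul_mul]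
      ring
  · intro h
    obtain ⟨t, ht0, ht1, rfl⟩ := fwd h
    have hm' : k + t • k = (1 + t) • k := by rw [add_smul, one_smul]
    have hl' : sg (t • k) * ‖t • k‖ = t * (sg k * ‖k‖) := sg_smul_mul t k
    have hmm : sg ((1 + t) • k) * ‖(1 + t) • k‖ = (1 + t) * (sg k * ‖k‖) :=
      sg_smul_mul (1 + t) k
    constructor
    · have hh : (inner ℝ (t • k) k : ℝ) = t * ‖k‖ ^ 2 := by
        rw [real_inner_smul_left, real_inner_self_eq_norm_sq]
      rw [hh]
      linear_combination (-(sg k * ‖k‖)) * hl' + (-(t * ‖k‖ ^ 2)) * hsk2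
    · rw [hm']
      have hh : (inner ℝ (t • k) ((1 + t) • k) : ℝ) = t * (1 + t) * ‖k‖ ^ 2 := by
        rw [real_inner_smul_left, real_inner_smul_right, real_inner_self_eq_norm_sq]; ring
      rw [hh]
      linear_combination (-(sg ((1 + t) • k) * ‖(1 + t) • k‖)) * hl'
        + (-(t * (sg k * ‖k‖))) * hmm + (-(t * (1 + t) * ‖k‖ ^ 2)) * hsk2
end

section
/- Let k, l ∈ ℝ² be nonzero vectors and set m := k + l, assumed nonzero. Then sg(k)·|k| + sg(l)·|l| ≠ −sg(m)·|m|. In other words, the set { (k, l) : k ≠ 0, l ≠ 0, m = k + l ≠ 0, sg(k)|k| + sg(l)|l| = −sg(m)|m| } is empty. -/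
lemma sg_smul (c : ℝ) (hc : 0 < c) (u : EuclideanSpace ℝ (Fin 2)) : sg (c • u) = sg u := by
  unfold sg
  have h0 : (c • u) 0 = c * u 0 := rfl
  have h1 : (c • u) 1 = c * u 1 := rfl
  rw [h0, h1]
  congr 1
  have e0 : 0 < c * u 0 ↔ 0 < u 0 := by
    constructor <;> intro h <;> nlinarith
  have e1 : 0 < c * u 1 ↔ 0 < u 1 := by
    constructor <;> intro h <;> nlinarith
  have e2 : c * u 0 = 0 ↔ u 0 = 0 := by
    simp [mul_eq_zero, hc.ne']
  rw [e0, e1, e2]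

lemma sg_cases (u : EuclideanSpace ℝ (Fin 2)) : sg u = 1 ∨ sg u = -1 := by
  unfold sg; split <;> simp

lemma key (u v : EuclideanSpace ℝ (Fin 2)) (hu : u ≠ 0) (hv : v ≠ 0)
    (h : ‖u + v‖ = ‖u‖ + ‖v‖) : sg (u + v) = sg u := by
  have hr : SameRay ℝ u v := (sameRay_iff_norm_add).mpr h
  obtain ⟨r₁, r₂, hr₁, hr₂, hrw⟩ := hr.exists_pos hu hv
  have hv' : v = (r₁ / r₂) • u := by
    rw [div_eq_mul_inv, mul_comm, mul_smul, hrw, smul_smul, inv_mul_cancel₀ hr₂.ne', one_smul]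
  have : u + v = (1 + r₁ / r₂) • u := by
    rw [hv', add_smul, one_smul]
  rw [this, sg_smul _ (by positivity) u]

/-- For nonzero `k, l ∈ ℝ²` with `m = k + l ≠ 0`, one never has
`sg(k)|k| + sg(l)|l| = −sg(m)|m|`; i.e. the corresponding resonance set is empty. -/
theorem resonance_set_sum_neg_empty
    (k l : EuclideanSpace ℝ (Fin 2)) (hk : k ≠ 0) (hl : l ≠ 0) (hm : k + l ≠ 0) :
    sg k * ‖k‖ + sg l * ‖l‖ ≠ -(sg (k + l) * ‖k + l‖) := by
  intro h
  have hnk : 0 < ‖k‖ := norm_pos_iff.mpr hk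
  have hnl : 0 < ‖l‖ := norm_pos_iff.mpr hl
  have hnm : 0 < ‖k + l‖ := norm_pos_iff.mpr hm
  have hlk : (k + l) + (-k) = l := by abel
  have hkl : (k + l) + (-l) = k := by abel
  have hnk' : (-k : EuclideanSpace ℝ (Fin 2)) ≠ 0 := neg_ne_zero.mpr hk
  have hnl' : (-l : EuclideanSpace ℝ (Fin 2)) ≠ 0 := neg_ne_zero.mpr hl
  rcases sg_cases k with ha | ha <;> rcases sg_cases l with hb | hb <;>
    rcases sg_cases (k + l) with hc | hc <;> rw [ha, hb, hc] at h
  · linarith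
  · -- sg k = 1, sg l = 1, sg m = -1 : ‖k+l‖ = ‖k‖+‖l‖
    have := key k l hk hl (by linarith)
    rw [ha, hc] at this; linarith
  · -- sg k = 1, sg l = -1, sg m = 1 : ‖l‖ = ‖m‖+‖k‖
    have := key (k + l) (-k) hm hnk' (by rw [hlk, norm_neg]; linarith)
    rw [hlk, hb, hc] at this; linarith
  · -- sg k = 1, sg l = -1, sg m = -1 : ‖k‖ = ‖m‖+‖l‖
    have := key (k + l) (-l) hm hnl' (by rw [hkl, norm_neg]; linarith)
    rw [hkl, ha, hc] at this; linarith
  · -- sg k = -1, sg l = 1, sg m = 1 : ‖k‖ = ‖m‖+‖l‖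
    have := key (k + l) (-l) hm hnl' (by rw [hkl, norm_neg]; linarith)
    rw [hkl, ha, hc] at this; linarith
  · -- sg k = -1, sg l = 1, sg m = -1 : ‖l‖ = ‖m‖+‖k‖
    have := key (k + l) (-k) hm hnk' (by rw [hlk, norm_neg]; linarith)
    rw [hlk, hb, hc] at this; linarith
  · -- sg k = -1, sg l = -1, sg m = 1 : ‖k+l‖ = ‖k‖+‖l‖
    have := key k l hk hl (by linarith)
    rw [ha, hc] at this; linarith
  · linarith
end
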